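/- Let (𝒩, B) be a no-signaling channel from n bits to N bits, let i ∈ [N], and let Y ∈ {−1,1}. (Case 1) If B(i) = ⊥, assume Y is in the support of 𝒩^{{i}}(x) (this support does not depend on x), and define the channel 𝒩' from n bits to N−1 bits by 𝒩'(x) = 𝒩^{[N]∖{i}}(x | y_i = Y). (Case 2) If B(i) = j ∈ [n], fix X ∈ {−1,1}, assume Y is in the support of 𝒩^{{i}} on inputs with x_j = X (this support depends only on x_j), and define the channel 𝒩' from n−1 bits to N−1 bits by 𝒩'(x_{[n]∖{j}}) = 𝒩^{[N]∖{i}}(x | y_i = Y) where x has x_j = X. In either case, define B' on [N]∖{i} by B'(ℓ) = ⊥ if B(ℓ) = B(i), and B'(ℓ) = B(ℓ) otherwise. Then (𝒩', B') is a no-signaling channel. -/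

import Mathlib

open scoped Classical ENNReal

noncomputable section

/-- A `±1` bit, encoded as a unit of `ℤ`. -/
abbrev Bit := ℤˣ

/-- A channel from `ι`-indexed bit strings to `κ`-indexed bit strings. -/
abbrev Channel (ι κ : Type) : Type := (ι → Bit) → PMF (κ → Bit)

/-- Marginal of a distribution on the cube on the coordinates in `T`. -/
def marg {κ : Type} (p : PMF (κ → Bit)) (T : Finset κ) : PMF ({i // i ∈ T} → Bit) :=
  p.map fun y i => y i.1

/-- The preimage `B⁻¹(S ∪ {⊥})`. -/
def preim {ι κ : Type} [Fintype κ] (B : κ → Option ι) (S : Finset ι) : Finset κ :=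
  Finset.univ.filter fun ℓ => ∀ a, B ℓ = some a → a ∈ S

/-- `(𝒩, B)` is a no-signaling channel: for every `S` and inputs agreeing on `S`, the
marginals of the outputs on `B⁻¹(S ∪ {⊥})` agree. -/
def NoSignaling {ι κ : Type} [Fintype κ] (𝒩 : Channel ι κ) (B : κ → Option ι) : Prop :=
  ∀ (S : Finset ι) (x x' : ι → Bit), (∀ a ∈ S, x a = x' a) →
    marg (𝒩 x) (preim B S) = marg (𝒩 x') (preim B S)


/-- If `Y` is in the support of the marginal of `p` on coordinate `i`, then the event
`{y | y i = Y}` meets the support of `p` (so `p` can be conditioned on it). -/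
lemma filter_ex {κ : Type} (p : PMF (κ → Bit)) (i : κ) (Y : Bit)
    (h : Y ∈ (p.map fun y => y i).support) :
    ∃ y ∈ {y : κ → Bit | y i = Y}, y ∈ p.support := by
  rw [PMF.support_map] at h
  obtain ⟨y, hy, rfl⟩ := h
  exact ⟨y, rfl, hy⟩

/-- Extend `z : {a // a ≠ j} → Bit` to all of `Fin n` by setting coordinate `j` to `X`. -/
def extendAt {n : ℕ} (j : Fin n) (X : Bit) (z : {a : Fin n // a ≠ j} → Bit) : Fin n → Bit :=
  fun a => if h : a = j then X else z ⟨a, h⟩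

end

/-- (Corollary 3.)  Conditioning a no-signaling channel on the value `Y` of a single
output coordinate `i` — and, if `B i = some j`, also fixing the input coordinate `j`
to `X` — yields a no-signaling channel on the remaining coordinates, with the backwards
lightcone function `B'` sending `ℓ` to `⊥` if `B ℓ = B i` and to `B ℓ` otherwise. -/
lemma filter_map_comm {α β : Type*} (p : PMF α) (f : α → β) (s : Set β)
    (h : ∃ a ∈ f ⁻¹' s, a ∈ p.support)
    (h' : ∃ b ∈ s, b ∈ (p.map f).support) :
    (p.filter (f ⁻¹' s) h).map f = (p.map f).filter s h' := by
  have hden : ∑' (b : β), s.indicator (⇑(p.map f)) b = ∑' (a : α), (f ⁻¹' s).indicator (⇑p) a := by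
    rw [← PMF.toOuterMeasure_apply, ← PMF.toOuterMeasure_apply, PMF.toOuterMeasure_map_apply]
  ext b
  rw [PMF.map_apply, PMF.filter_apply, hden]
  by_cases hb : b ∈ s
  · rw [Set.indicator_of_mem hb, PMF.map_apply, ← ENNReal.tsum_mul_right]
    refine tsum_congr fun a => ?_
    by_cases hab : b = f a
    · rw [if_pos hab, if_pos hab, PMF.filter_apply,
        Set.indicator_of_mem (show a ∈ f ⁻¹' s by simp [Set.mem_preimage, ← hab, hb])]
    · simp [hab]
  · rw [Set.indicator_of_notMem hb, zero_mul]
    refine ENNReal.summable.tsum_eq_zero_iff.2 fun a => ?_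
    by_cases hab : b = f a
    · rw [if_pos hab, PMF.filter_apply,
        Set.indicator_of_notMem (show a ∉ f ⁻¹' s by simp [Set.mem_preimage, ← hab, hb]), zero_mul]
    · simp [hab]

lemma cond_marg_eq {κ κ' : Type} [Fintype κ] (p q : PMF (κ → Bit)) (T : Finset κ)
    (i : κ) (hi : i ∈ T) (Y : Bit)
    (hmarg : marg p T = marg q T)
    (hp : ∃ y ∈ {y : κ → Bit | y i = Y}, y ∈ p.support)
    (hq : ∃ y ∈ {y : κ → Bit | y i = Y}, y ∈ q.support)
    (e : κ' → κ) (he : ∀ t, e t ∈ T) :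
    (p.filter {y | y i = Y} hp).map (fun y t => y (e t))
      = (q.filter {y | y i = Y} hq).map (fun y t => y (e t)) := by
  set f : (κ → Bit) → ({t // t ∈ T} → Bit) := fun y t => y t.1 with hf
  set s : Set ({t // t ∈ T} → Bit) := {w | w ⟨i, hi⟩ = Y} with hs
  set g : ({t // t ∈ T} → Bit) → (κ' → Bit) := fun w t => w ⟨e t, he t⟩ with hg
  have hpre : f ⁻¹' s = {y : κ → Bit | y i = Y} := rfl
  have hp' : ∃ a ∈ f ⁻¹' s, a ∈ p.support := hp
  have hq' : ∃ a ∈ f ⁻¹' s, a ∈ q.support := hq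
  have hps : ∃ b ∈ s, b ∈ (p.map f).support := by
    obtain ⟨a, ha, hap⟩ := hp'
    exact ⟨f a, ha, by rw [PMF.support_map]; exact Set.mem_image_of_mem f hap⟩
  have hqs : ∃ b ∈ s, b ∈ (q.map f).support := by
    obtain ⟨a, ha, hap⟩ := hq'
    exact ⟨f a, ha, by rw [PMF.support_map]; exact Set.mem_image_of_mem f hap⟩
  have hfilt : (p.map f).filter s hps = (q.map f).filter s hqs := by
    have : p.map f = q.map f := hmarg
    revert hps hqs; rw [this]; intro _ _; rfl
  calc (p.filter {y | y i = Y} hp).map (fun y t => y (e t))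
      = ((p.filter (f ⁻¹' s) hp').map f).map g := by rw [PMF.map_comp]; rfl
    _ = ((p.map f).filter s hps).map g := by rw [filter_map_comm]
    _ = ((q.map f).filter s hqs).map g := by rw [hfilt]
    _ = ((q.filter (f ⁻¹' s) hq').map f).map g := by rw [filter_map_comm]
    _ = (q.filter {y | y i = Y} hq).map (fun y t => y (e t)) := by rw [PMF.map_comp]; rfl

theorem nsc_conditioning {n N : ℕ}
    (𝒩 : Channel (Fin n) (Fin N)) (B : Fin N → Option (Fin n))
    (hNS : NoSignaling 𝒩 B) (i : Fin N) (Y : Bit) :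
    (∀ (_ : B i = none)
        (hsup : ∀ x : Fin n → Bit, Y ∈ ((𝒩 x).map fun y => y i).support),
      NoSignaling (ι := Fin n) (κ := {ℓ : Fin N // ℓ ≠ i})
        (fun x => ((𝒩 x).filter {y | y i = Y} (filter_ex (𝒩 x) i Y (hsup x))).map
          fun y ℓ => y ℓ.1)
        (fun ℓ => B ℓ.1))
    ∧ (∀ (j : Fin n) (X : Bit) (_ : B i = some j)
        (hsup : ∀ x : Fin n → Bit, x j = X → Y ∈ ((𝒩 x).map fun y => y i).support),
      NoSignaling (ι := {a : Fin n // a ≠ j}) (κ := {ℓ : Fin N // ℓ ≠ i})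
        (fun z => ((𝒩 (extendAt j X z)).filter {y | y i = Y}
            (filter_ex (𝒩 (extendAt j X z)) i Y
              (hsup (extendAt j X z) (by simp [extendAt])))).map
          fun y ℓ => y ℓ.1)
        (fun ℓ => (B ℓ.1).bind fun a => if h : a = j then none else some ⟨a, h⟩))  := by
  constructor
  · intro hBi hsup S x x' hag
    have hi : i ∈ preim B S := by simp [preim, hBi]
    have he : ∀ t : {t : {ℓ : Fin N // ℓ ≠ i} // t ∈ preim (fun ℓ => B ℓ.1) S},
        t.1.1 ∈ preim B S := by
      rintro ⟨⟨ℓ, hℓ⟩, ht⟩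
      simp only [preim, Finset.mem_filter, Finset.mem_univ, true_and] at ht ⊢
      exact ht
    show marg _ _ = marg _ _
    unfold marg
    rw [PMF.map_comp, PMF.map_comp]
    exact cond_marg_eq (𝒩 x) (𝒩 x') (preim B S) i hi Y (hNS S x x' hag) _ _ _ he
  · intro j X hBi hsup S z z' hag
    set S₀ : Finset (Fin n) := insert j (S.image Subtype.val) with hS₀
    have hxag : ∀ a ∈ S₀, extendAt j X z a = extendAt j X z' a := by
      intro a ha
      rcases Finset.mem_insert.1 ha with rfl | ha
      · simp [extendAt]
      · obtain ⟨b, hb, rfl⟩ := Finset.mem_image.1 ha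
        have hbj : (b : Fin n) ≠ j := b.2
        simp only [extendAt, dif_neg hbj]
        have : (⟨(b : Fin n), hbj⟩ : {a : Fin n // a ≠ j}) = b := Subtype.ext rfl
        rw [this, hag b hb]
    have hi : i ∈ preim B S₀ := by simp [preim, hBi, hS₀]
    have he : ∀ t : {t : {ℓ : Fin N // ℓ ≠ i} //
        t ∈ preim (fun ℓ => (B ℓ.1).bind fun a => if h : a = j then none else some ⟨a, h⟩) S},
        t.1.1 ∈ preim B S₀ := by
      rintro ⟨⟨ℓ, hℓ⟩, ht⟩
      simp only [preim, Finset.mem_filter, Finset.mem_univ, true_and] at ht ⊢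
      intro a hBa
      by_cases haj : a = j
      · subst haj; exact Finset.mem_insert_self _ _
      · have : (⟨a, haj⟩ : {a : Fin n // a ≠ j}) ∈ S := by
          apply ht
          rw [hBa]
          simp [haj]
        exact Finset.mem_insert_of_mem (Finset.mem_image_of_mem _ this)
    show marg _ _ = marg _ _
    unfold marg
    rw [PMF.map_comp, PMF.map_comp]
    exact cond_marg_eq (𝒩 (extendAt j X z)) (𝒩 (extendAt j X z')) (preim B S₀) i hi Y
      (hNS S₀ _ _ hxag) _ _ _ he
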